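/- Strict monotonicity of the q-deformed opposite-side function: let q > 0 and c > 0, and define T : [0, 1] → ℝ by T(t) := q^{Arg(1 + c·q^{−t}·e^{iπt})/π} · |1 + c·q^{−t}·e^{iπt}|, where Arg is the principal argument of a complex number (with the convention Arg 0 = 0). Then T is strictly decreasing on [0, 1]; in particular T is injective on [0, 1]. -/

import Mathlib

open Complex Set

/-- The q-deformed length of the side opposite the angle πt in a triangle with sides 1
and c·q^{−t} enclosing the angle πt:
T(t) = q^{Arg(1 + c·q^{−t}·e^{iπt})/π} · |1 + c·q^{−t}·e^{iπt}|. -/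
noncomputable def oppositeSide (q c t : ℝ) : ℝ :=
  q ^ ((1 + (↑(c * q ^ (-t)) : ℂ) * Complex.exp (Real.pi * t * Complex.I)).arg / Real.pi) *
    ‖(1 + (↑(c * q ^ (-t)) : ℂ) * Complex.exp (Real.pi * t * Complex.I))‖

noncomputable def qK (q : ℝ) : ℂ := (Real.pi : ℂ) * Complex.I - (Real.log q : ℂ)

noncomputable def qw (q c t : ℝ) : ℂ :=
  1 + (↑(c * q ^ (-t)) : ℂ) * Complex.exp (Real.pi * t * Complex.I)

lemma qw_eq (q c : ℝ) (hq : 0 < q) (t : ℝ) :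
    qw q c t = 1 + (c : ℂ) * Complex.exp ((t : ℂ) * qK q) := by
  unfold qw qK
  rw [Real.rpow_def_of_pos hq]
  push_cast
  rw [mul_assoc, ← Complex.exp_add]
  ring_nf

lemma qw_im (q c t : ℝ) : (qw q c t).im = c * q ^ (-t) * Real.sin (Real.pi * t) := by
  unfold qw
  simp [Complex.exp_mul_I, ← Complex.ofReal_mul, ← Complex.ofReal_sin, ← Complex.ofReal_cos,
    Complex.add_im, Complex.mul_im]

lemma qw_hasDerivAt (q c : ℝ) (hq : 0 < q) (t : ℝ) :
    HasDerivAt (qw q c) (qK q * (qw q c t - 1)) t := by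
  have hfun : qw q c = fun t : ℝ => 1 + (c : ℂ) * Complex.exp ((t : ℂ) * qK q) := by
    funext t; exact qw_eq q c hq t
  rw [hfun]
  have h1 : HasDerivAt (fun t : ℝ => ((t : ℂ) * qK q)) (qK q) t := by
    simpa using Complex.ofRealCLM.hasDerivAt.mul_const (qK q)
  have h2 := ((h1.cexp.const_mul (c : ℂ)).const_add 1)
  convert h2 using 1
  · rfl
  simp
  ring

noncomputable def qF (q c t : ℝ) : ℝ :=
  ((1 - (↑(Real.log q / Real.pi) : ℂ) * Complex.I) * Complex.log (qw q c t)).re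

lemma qF_hasDerivAt (q c : ℝ) (hq : 0 < q) (t : ℝ) (hs : qw q c t ∈ Complex.slitPlane) :
    HasDerivAt (qF q c)
      (((1 - (↑(Real.log q / Real.pi) : ℂ) * Complex.I) *
        (qK q * (qw q c t - 1) / qw q c t)).re) t := by
  have h1 := (qw_hasDerivAt q c hq t).clog_real hs
  have h2 := h1.const_mul (1 - (↑(Real.log q / Real.pi) : ℂ) * Complex.I)
  exact Complex.reCLM.hasFDerivAt.comp_hasDerivAt t h2

lemma qF_deriv_neg (q c : ℝ) (hq : 0 < q) (hc : 0 < c) {t : ℝ} (ht : t ∈ Ioo (0:ℝ) 1) :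
    (((1 - (↑(Real.log q / Real.pi) : ℂ) * Complex.I) *
        (qK q * (qw q c t - 1) / qw q c t)).re) < 0 := by
  set l := Real.log q / Real.pi with hl
  have hpi := Real.pi_pos
  have him : 0 < (qw q c t).im := by
    rw [qw_im]
    have hs : 0 < Real.sin (Real.pi * t) :=
      Real.sin_pos_of_pos_of_lt_pi (by nlinarith [ht.1]) (by nlinarith [ht.2])
    have : (0:ℝ) < q ^ (-t) := Real.rpow_pos_of_pos hq _
    positivity
  have hw0 : qw q c t ≠ 0 := by
    intro h; rw [h] at him; simp at him
  have hkey : (1 - (↑l : ℂ) * Complex.I) * qK q = ((Real.pi * (1 + l^2) : ℝ) : ℂ) * Complex.I := by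
    have hlog : (Real.log q : ℂ) = (Real.pi : ℂ) * (l : ℂ) := by
      have hpine : (Real.pi : ℂ) ≠ 0 := by exact_mod_cast Real.pi_ne_zero
      rw [hl]; push_cast; field_simp
    rw [qK, hlog]
    apply Complex.ext <;> simp [Complex.mul_re, Complex.mul_im, ← Complex.ofReal_pow] <;> ring
  have hrw : (1 - (↑l : ℂ) * Complex.I) * (qK q * (qw q c t - 1) / qw q c t)
      = ((Real.pi * (1 + l^2) : ℝ) : ℂ) * Complex.I * ((qw q c t - 1) / qw q c t) := by
    rw [← hkey]; ring
  rw [hrw]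
  have him2 : ((qw q c t - 1) / qw q c t).im = (qw q c t).im / Complex.normSq (qw q c t) := by
    rw [Complex.div_im]
    simp only [Complex.sub_re, Complex.sub_im, Complex.one_re, Complex.one_im]
    ring
  have hre : (((Real.pi * (1 + l^2) : ℝ) : ℂ) * Complex.I * ((qw q c t - 1) / qw q c t)).re
      = -((Real.pi * (1 + l^2)) * (((qw q c t - 1) / qw q c t)).im) := by
    simp [Complex.mul_re, Complex.mul_im, ← Complex.ofReal_pow]
  rw [hre, him2]
  have hns : 0 < Complex.normSq (qw q c t) := Complex.normSq_pos.2 hw0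
  have hA : 0 < Real.pi * (1 + l ^ 2) := by positivity
  have hB : 0 < (qw q c t).im / Complex.normSq (qw q c t) := by positivity
  nlinarith

lemma qw_zero (q c : ℝ) : qw q c 0 = ((1 + c : ℝ) : ℂ) := by
  simp [qw]

lemma qw_im_pos (q c : ℝ) (hq : 0 < q) (hc : 0 < c) {t : ℝ} (ht : t ∈ Ioo (0:ℝ) 1) :
    0 < (qw q c t).im := by
  have hpi := Real.pi_pos
  rw [qw_im]
  have hs : 0 < Real.sin (Real.pi * t) :=
    Real.sin_pos_of_pos_of_lt_pi (by nlinarith [ht.1]) (by nlinarith [ht.2])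
  have : (0:ℝ) < q ^ (-t) := Real.rpow_pos_of_pos hq _
  positivity

lemma qw_im_nonneg (q c : ℝ) (hq : 0 < q) (hc : 0 < c) {t : ℝ} (ht : t ∈ Icc (0:ℝ) 1) :
    0 ≤ (qw q c t).im := by
  have hpi := Real.pi_pos
  rw [qw_im]
  have hs : 0 ≤ Real.sin (Real.pi * t) :=
    Real.sin_nonneg_of_nonneg_of_le_pi (by nlinarith [ht.1]) (by nlinarith [ht.2])
  have : (0:ℝ) < q ^ (-t) := Real.rpow_pos_of_pos hq _
  positivity

lemma qw_slit (q c : ℝ) (hq : 0 < q) (hc : 0 < c) {t : ℝ} (ht : t ∈ Ico (0:ℝ) 1) :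
    qw q c t ∈ Complex.slitPlane := by
  rw [Complex.mem_slitPlane_iff]
  rcases eq_or_lt_of_le ht.1 with h0 | h0
  · left
    rw [← h0, qw_zero]
    simp only [Complex.ofReal_re]
    linarith
  · right
    exact (qw_im_pos q c hq hc ⟨h0, ht.2⟩).ne'

lemma qw_continuous (q c : ℝ) (hq : 0 < q) : Continuous (qw q c) := by
  have hfun : qw q c = fun t : ℝ => 1 + (c : ℂ) * Complex.exp ((t : ℂ) * qK q) :=
    funext (qw_eq q c hq)
  rw [hfun]
  fun_prop

lemma qlog_contOn (q c : ℝ) (hq : 0 < q) (hc : 0 < c) (hw1 : qw q c 1 ≠ 0) :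
    ContinuousOn (fun t => Complex.log (qw q c t)) (Icc (0:ℝ) 1) := by
  intro x hx
  by_cases hsl : qw q c x ∈ Complex.slitPlane
  · exact ((continuousAt_clog hsl).comp
      (qw_continuous q c hq).continuousAt).continuousWithinAt
  · have hx1 : x = 1 := by
      by_contra h
      exact hsl (qw_slit q c hq hc ⟨hx.1, lt_of_le_of_ne hx.2 h⟩)
    subst hx1
    rw [Complex.mem_slitPlane_iff] at hsl
    push_neg at hsl
    have hre : (qw q c 1).re < 0 := by
      rcases lt_or_eq_of_le hsl.1 with h | h
      · exact h
      · exfalso; exact hw1 (Complex.ext (by simpa using h) (by simpa using hsl.2))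
    have hcont := Complex.continuousWithinAt_log_of_re_neg_of_im_zero hre hsl.2
    have hmap : MapsTo (qw q c) (Icc (0:ℝ) 1) {z : ℂ | 0 ≤ z.im} :=
      fun y hy => qw_im_nonneg q c hq hc hy
    exact hcont.comp (qw_continuous q c hq).continuousWithinAt hmap

lemma qF_contOn (q c : ℝ) (hq : 0 < q) (hc : 0 < c) (hw1 : qw q c 1 ≠ 0) :
    ContinuousOn (qF q c) (Icc (0:ℝ) 1) :=
  Complex.continuous_re.comp_continuousOn
    (continuousOn_const.mul (qlog_contOn q c hq hc hw1))

lemma qF_contOn' (q c : ℝ) (hq : 0 < q) (hc : 0 < c) :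
    ContinuousOn (qF q c) (Ico (0:ℝ) 1) := by
  apply Complex.continuous_re.comp_continuousOn
  apply continuousOn_const.mul
  intro x hx
  exact ((continuousAt_clog (qw_slit q c hq hc hx)).comp
    (qw_continuous q c hq).continuousAt).continuousWithinAt

lemma oppositeSide_eq (q c t : ℝ) :
    oppositeSide q c t = q ^ ((qw q c t).arg / Real.pi) * ‖qw q c t‖ := rfl

lemma oppositeSide_eq_exp (q c : ℝ) (hq : 0 < q) {t : ℝ} (hw : qw q c t ≠ 0) :
    oppositeSide q c t = Real.exp (qF q c t) := by
  have habs : 0 < ‖qw q c t‖ := norm_pos_iff.mpr hw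
  rw [oppositeSide_eq, Real.rpow_def_of_pos hq, ← Real.exp_log habs, ← Real.exp_add]
  congr 1
  have h1 : qF q c t
      = (Complex.log (qw q c t)).re + (Real.log q / Real.pi) * (Complex.log (qw q c t)).im := by
    unfold qF
    simp [Complex.mul_re, Complex.sub_re, Complex.sub_im]
  rw [h1, Complex.log_re, Complex.log_im]
  ring

lemma oppositeSide_pos (q c : ℝ) (hq : 0 < q) {t : ℝ} (hw : qw q c t ≠ 0) :
    0 < oppositeSide q c t := by
  rw [oppositeSide_eq_exp q c hq hw]; exact Real.exp_pos _

lemma oppositeSide_of_zero (q c : ℝ) {t : ℝ} (hw : qw q c t = 0) :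
    oppositeSide q c t = 0 := by
  rw [oppositeSide_eq, hw]; simp

theorem oppositeSide_strictAntiOn (q c : ℝ) (hq : 0 < q) (hc : 0 < c) :
    StrictAntiOn (oppositeSide q c) (Set.Icc 0 1) ∧
      Set.InjOn (oppositeSide q c) (Set.Icc 0 1) := by
  suffices key : StrictAntiOn (oppositeSide q c) (Set.Icc 0 1) from ⟨key, key.injOn⟩
  by_cases hw1 : qw q c 1 = 0
  · -- endpoint degenerates to 0
    have hF : StrictAntiOn (qF q c) (Ico (0:ℝ) 1) := by
      apply strictAntiOn_of_deriv_neg (convex_Ico 0 1) (qF_contOn' q c hq hc)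
      intro x hx
      rw [interior_Ico] at hx
      rw [(qF_hasDerivAt q c hq x (qw_slit q c hq hc ⟨hx.1.le, hx.2⟩)).deriv]
      exact qF_deriv_neg q c hq hc hx
    intro x hx y hy hxy
    have hx' : x ∈ Ico (0:ℝ) 1 := ⟨hx.1, lt_of_lt_of_le hxy hy.2⟩
    have hwx : qw q c x ≠ 0 := Complex.slitPlane_ne_zero (qw_slit q c hq hc hx')
    by_cases hy1 : y = 1
    · subst hy1
      rw [oppositeSide_of_zero q c hw1]
      exact oppositeSide_pos q c hq hwx
    · have hy' : y ∈ Ico (0:ℝ) 1 := ⟨hy.1, lt_of_le_of_ne hy.2 hy1⟩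
      have hwy : qw q c y ≠ 0 := Complex.slitPlane_ne_zero (qw_slit q c hq hc hy')
      rw [oppositeSide_eq_exp q c hq hwx, oppositeSide_eq_exp q c hq hwy]
      exact Real.exp_lt_exp.2 (hF hx' hy' hxy)
  · have hF : StrictAntiOn (qF q c) (Icc (0:ℝ) 1) := by
      apply strictAntiOn_of_deriv_neg (convex_Icc 0 1) (qF_contOn q c hq hc hw1)
      intro x hx
      rw [interior_Icc] at hx
      rw [(qF_hasDerivAt q c hq x (qw_slit q c hq hc ⟨hx.1.le, hx.2⟩)).deriv]
      exact qF_deriv_neg q c hq hc hx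
    intro x hx y hy hxy
    have hwx : qw q c x ≠ 0 := by
      by_cases hx1 : x = 1
      · rw [hx1]; exact hw1
      · exact Complex.slitPlane_ne_zero (qw_slit q c hq hc ⟨hx.1, lt_of_le_of_ne hx.2 hx1⟩)
    have hwy : qw q c y ≠ 0 := by
      by_cases hy1 : y = 1
      · rw [hy1]; exact hw1
      · exact Complex.slitPlane_ne_zero (qw_slit q c hq hc ⟨hy.1, lt_of_le_of_ne hy.2 hy1⟩)
    rw [oppositeSide_eq_exp q c hq hwx, oppositeSide_eq_exp q c hq hwy]
    exact Real.exp_lt_exp.2 (hF hx hy hxy)
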